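/- arXiv:2504.17718 — 6 statements merged into one kernel-verified Lean document; each statement's English description precedes it below -/
import Mathlib

section
/- For a positive definite matrix W in R^{n×n} and radii r ≥ s ≥ 0, the Pontryagin difference of the ellipsoids E_W(r) = {x : xᵀW⁻¹x ≤ r²} and E_W(s) satisfies E_W(r) ⊖ E_W(s) = E_W(r − s). -/
open Matrix

/-- Ellipsoid of shape `W` and radius `r`. -/
def ell {n : ℕ} (W : Matrix (Fin n) (Fin n) ℝ) (r : ℝ) : Set (Fin n → ℝ) :=
  {x | x ⬝ᵥ W⁻¹ *ᵥ x ≤ r ^ 2}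

/-- Pontryagin set difference `A ⊖ B`. -/
def pontryaginDiff {n : ℕ} (A B : Set (Fin n → ℝ)) : Set (Fin n → ℝ) :=
  {a | ∀ b ∈ B, a + b ∈ A}

theorem ell_pontryaginDiff {n : ℕ} (W : Matrix (Fin n) (Fin n) ℝ)
    (hW : W.PosDef) (r s : ℝ) (hs : 0 ≤ s) (hrs : s ≤ r) :
    pontryaginDiff (ell W r) (ell W s) = ell W (r - s) := by
  have hr : 0 ≤ r := hs.trans hrs
  have hrs' : 0 ≤ r - s := sub_nonneg.mpr hrs
  have hM : (W⁻¹).PosDef := hW.inv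
  set M := W⁻¹ with hMdef
  set Q : (Fin n → ℝ) → ℝ := fun x => x ⬝ᵥ M *ᵥ x with hQ
  have hQnn : ∀ x, 0 ≤ Q x := by
    intro x
    have := hM.posSemidef.re_dotProduct_nonneg x
    simpa using this
  have hsymm : ∀ x y : Fin n → ℝ, x ⬝ᵥ M *ᵥ y = y ⬝ᵥ M *ᵥ x := by
    intro x y
    have hH : Mᵀ = M := hM.isHermitian
    rw [dotProduct_mulVec, ← mulVec_transpose, hH, dotProduct_comm]
  have hexp : ∀ x y : Fin n → ℝ, Q (x + y) = Q x + 2 * (x ⬝ᵥ M *ᵥ y) + Q y := by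
    intro x y
    simp only [hQ, mulVec_add, dotProduct_add, add_dotProduct]
    rw [hsymm y x]; ring
  have hsmul : ∀ (t : ℝ) (x : Fin n → ℝ), Q (t • x) = t ^ 2 * Q x := by
    intro t x
    simp only [hQ, mulVec_smul, dotProduct_smul, smul_dotProduct, smul_eq_mul]
    ring
  have hsq : ∀ x, Real.sqrt (Q x) ^ 2 = Q x := fun x => Real.sq_sqrt (hQnn x)
  have hCS : ∀ x y : Fin n → ℝ,
      x ⬝ᵥ M *ᵥ y ≤ Real.sqrt (Q x) * Real.sqrt (Q y) := by
    intro x y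
    have hpoly : ∀ t : ℝ, 0 ≤ Q y * (t * t) + (2 * (x ⬝ᵥ M *ᵥ y)) * t + Q x := by
      intro t
      have := hQnn (x + t • y)
      rw [hexp x (t • y), hsmul t y] at this
      have hb : x ⬝ᵥ M *ᵥ (t • y) = t * (x ⬝ᵥ M *ᵥ y) := by
        rw [mulVec_smul, dotProduct_smul, smul_eq_mul]
      rw [hb] at this
      nlinarith [this]
    have hd := discrim_le_zero hpoly
    rw [discrim] at hd
    have h2 : (x ⬝ᵥ M *ᵥ y) ^ 2 ≤ Q x * Q y := by nlinarith [hd]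
    calc x ⬝ᵥ M *ᵥ y ≤ |x ⬝ᵥ M *ᵥ y| := le_abs_self _
      _ = Real.sqrt ((x ⬝ᵥ M *ᵥ y) ^ 2) := (Real.sqrt_sq_eq_abs _).symm
      _ ≤ Real.sqrt (Q x * Q y) := Real.sqrt_le_sqrt h2
      _ = Real.sqrt (Q x) * Real.sqrt (Q y) := Real.sqrt_mul (hQnn x) _
  ext a
  simp only [pontryaginDiff, ell, Set.mem_setOf_eq, ← hMdef]
  change (∀ b, Q b ≤ s ^ 2 → Q (a + b) ≤ r ^ 2) ↔ Q a ≤ (r - s) ^ 2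
  constructor
  · intro h
    set qa := Real.sqrt (Q a) with hqa
    have hqann : 0 ≤ qa := Real.sqrt_nonneg _
    rcases eq_or_lt_of_le hqann with h0 | hpos
    · have : Q a = 0 := by
        rw [← hsq a, ← hqa, ← h0]; ring
      rw [this]
      positivity
    · have hb : Q ((s / qa) • a) ≤ s ^ 2 := by
        rw [hsmul, ← hsq a, div_pow, div_mul_cancel₀]
        positivity
      have := h _ hb
      have key : a + (s / qa) • a = (1 + s / qa) • a := by
        rw [add_smul, one_smul]
      rw [key, hsmul] at this
      have hQa : Q a = qa ^ 2 := (hsq a).symm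
      rw [hQa] at this ⊢
      have h1 : ((1 + s / qa) * qa) ^ 2 ≤ r ^ 2 := by
        rw [mul_pow]; exact this
      have h2 : (1 + s / qa) * qa = qa + s := by
        field_simp
      rw [h2] at h1
      have h3 : qa + s ≤ r := by
        nlinarith [h1, hqann, hs, hr]
      have : qa ≤ r - s := by linarith
      exact pow_le_pow_left₀ hqann this 2
  · intro h b hb
    have hqa : Real.sqrt (Q a) ≤ r - s := by
      calc Real.sqrt (Q a) ≤ Real.sqrt ((r - s) ^ 2) := Real.sqrt_le_sqrt h
        _ = r - s := by rw [Real.sqrt_sq hrs']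
    have hqb : Real.sqrt (Q b) ≤ s := by
      calc Real.sqrt (Q b) ≤ Real.sqrt (s ^ 2) := Real.sqrt_le_sqrt hb
        _ = s := by rw [Real.sqrt_sq hs]
    have := hCS a b
    rw [hexp a b]
    nlinarith [hsq a, hsq b, Real.sqrt_nonneg (Q a), Real.sqrt_nonneg (Q b), this, hqa, hqb]
end

section
/- Let A_K be an n×n matrix, W ≻ 0 and λ ∈ (0,1) with A_K W A_Kᵀ ⪯ λ² W, and let Γ_w ⪯ (1−λ)² W. Define E_0 = 0 and E_{ℓ+1} = A_K E_ℓ A_Kᵀ + Γ_w. Then for every ℓ ∈ N, E_ℓ ⪯ (1 − λ^ℓ)² W. -/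
open Matrix

lemma psd_smul_aux {n : ℕ} {A : Matrix (Fin n) (Fin n) ℝ} (hA : A.PosSemidef)
    {c : ℝ} (hc : 0 ≤ c) : (c • A).PosSemidef := by
  constructor
  · show (c • A)ᴴ = c • A
    rw [Matrix.conjTranspose_smul, hA.1.eq]
    simp
  · intro x
    have h := mul_nonneg hc (hA.2 x)
    refine le_of_le_of_eq h ?_
    simp only [Finsupp.sum, Finset.mul_sum, Matrix.smul_apply, smul_eq_mul]
    exact Finset.sum_congr rfl fun i _ => Finset.sum_congr rfl fun j _ => by ring

theorem covariance_recursion_bound {n : ℕ}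
    (A_K W Γ_w : Matrix (Fin n) (Fin n) ℝ) (hW : W.PosDef)
    (lam : ℝ) (hlam0 : 0 < lam) (hlam1 : lam < 1)
    (hΓ : Γ_w.PosSemidef)
    (hAW : (lam ^ 2 • W - A_K * W * A_Kᵀ).PosSemidef)
    (hΓW : ((1 - lam) ^ 2 • W - Γ_w).PosSemidef)
    (E : ℕ → Matrix (Fin n) (Fin n) ℝ)
    (hE0 : E 0 = 0)
    (hErec : ∀ ℓ, E (ℓ + 1) = A_K * E ℓ * A_Kᵀ + Γ_w) :
    ∀ ℓ : ℕ, ((1 - lam ^ ℓ) ^ 2 • W - E ℓ).PosSemidef := by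
  intro ℓ
  induction ℓ with
  | zero =>
    refine ⟨?_, ?_⟩ <;> simp [hE0, Matrix.IsHermitian]
  | succ ℓ ih =>
    have key : (1 - lam ^ (ℓ + 1)) ^ 2 • W - E (ℓ + 1)
        = A_K * ((1 - lam ^ ℓ) ^ 2 • W - E ℓ) * A_Kᵀ
          + (1 - lam ^ ℓ) ^ 2 • (lam ^ 2 • W - A_K * W * A_Kᵀ)
          + ((1 - lam) ^ 2 • W - Γ_w)
          + (2 * lam * (1 - lam) * (1 - lam ^ ℓ)) • W := by
      rw [hErec, pow_succ]
      simp only [Matrix.mul_sub, Matrix.sub_mul, Matrix.mul_smul, Matrix.smul_mul,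
        smul_sub, smul_smul]
      module
    rw [key]
    have h1 : (A_K * ((1 - lam ^ ℓ) ^ 2 • W - E ℓ) * A_Kᵀ).PosSemidef := by
      have := ih.mul_mul_conjTranspose_same A_K
      simpa [Matrix.conjTranspose_eq_transpose_of_trivial] using this
    have h2 := psd_smul_aux hAW (sq_nonneg (1 - lam ^ ℓ))
    have hpl : lam ^ ℓ ≤ 1 := pow_le_one₀ hlam0.le hlam1.le
    have h4 : (0:ℝ) ≤ 2 * lam * (1 - lam) * (1 - lam ^ ℓ) := by
      have := sub_nonneg.mpr hpl
      have := sub_nonneg.mpr hlam1.le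
      positivity
    exact ((h1.add h2).add hΓW).add (psd_smul_aux hW.posSemidef h4)
end

section
/- Let W_x, W_u be positive definite, K a matrix with Kᵀ W_u⁻¹ K ⪯ W_x⁻¹, and let r_x, r_u ≥ 0 satisfy E_{W_x}(r_x) ⊆ X and E_{W_u}(r_u) ⊆ U for sets X ⊆ R^n, U ⊆ R^m. Set r_{xu} = min{r_x, r_u}. Then every x ∈ E_{W_x}(r_{xu}) satisfies x ∈ X and Kx ∈ U. -/
open Matrix

theorem terminal_ellipsoid_in_XK {n m : ℕ}
    (K : Matrix (Fin m) (Fin n) ℝ)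
    (Wx : Matrix (Fin n) (Fin n) ℝ) (Wu : Matrix (Fin m) (Fin m) ℝ)
    (hWx : Wx.PosDef) (hWu : Wu.PosDef)
    (hKW : (Wx⁻¹ - Kᵀ * Wu⁻¹ * K).PosSemidef)
    (X : Set (Fin n → ℝ)) (U : Set (Fin m → ℝ))
    (rx ru : ℝ) (hrx : 0 ≤ rx) (hru : 0 ≤ ru)
    (hXincl : ell Wx rx ⊆ X) (hUincl : ell Wu ru ⊆ U) :
    ∀ x ∈ ell Wx (min rx ru), x ∈ X ∧ K *ᵥ x ∈ U := by
  intro x hx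
  have hmin : 0 ≤ min rx ru := le_min hrx hru
  have hx' : x ⬝ᵥ Wx⁻¹ *ᵥ x ≤ (min rx ru) ^ 2 := hx
  have hsq : ∀ r : ℝ, min rx ru ≤ r → (min rx ru) ^ 2 ≤ r ^ 2 := fun r hr =>
    pow_le_pow_left₀ hmin hr 2
  have hxX : x ∈ X := hXincl (le_trans hx' (hsq rx (min_le_left _ _)))
  refine ⟨hxX, hUincl ?_⟩
  have hpsd := (posSemidef_iff_dotProduct_mulVec.mp hKW).2 x
  simp only [star_trivial, sub_mulVec, dotProduct_sub, Matrix.mul_assoc] at hpsd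
  have key : x ⬝ᵥ (Kᵀ * (Wu⁻¹ * K)) *ᵥ x ≤ x ⬝ᵥ Wx⁻¹ *ᵥ x := by linarith
  have heq : (K *ᵥ x) ⬝ᵥ Wu⁻¹ *ᵥ (K *ᵥ x) = x ⬝ᵥ (Kᵀ * (Wu⁻¹ * K)) *ᵥ x := by
    rw [← mulVec_mulVec, ← mulVec_mulVec, dotProduct_mulVec x, vecMul_transpose,
      dotProduct_mulVec (K *ᵥ x)]
  show (K *ᵥ x) ⬝ᵥ Wu⁻¹ *ᵥ (K *ᵥ x) ≤ ru ^ 2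
  rw [heq]
  exact le_trans key (le_trans hx' (hsq ru (min_le_right _ _)))
end

section
/- Let λ ∈ (0,1), n ∈ N⁺, and ρ ≥ √(n(1−λ)/(1+λ)). Then for every γ ≥ 1, r ≥ ρ, and every ℓ ∈ N: (γ r − ρ(1 − λ^{ℓ+1}))² + n(1−λ)² λ^{2ℓ} ≤ (γ r − ρ(1 − λ^ℓ))². -/
theorem key_scalar_inequality (lam : ℝ) (hlam0 : 0 < lam) (hlam1 : lam < 1)
    (n : ℕ) (hn : 0 < n) (ρ : ℝ)
    (hρ : Real.sqrt ((n : ℝ) * (1 - lam) / (1 + lam)) ≤ ρ) :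
    ∀ (γ r : ℝ), 1 ≤ γ → ρ ≤ r → ∀ ℓ : ℕ,
      (γ * r - ρ * (1 - lam ^ (ℓ + 1))) ^ 2 + (n : ℝ) * (1 - lam) ^ 2 * lam ^ (2 * ℓ)
        ≤ (γ * r - ρ * (1 - lam ^ ℓ)) ^ 2 := by
  have hρ0 : 0 ≤ ρ := le_trans (Real.sqrt_nonneg _) hρ
  have hxnn : 0 ≤ (n : ℝ) * (1 - lam) / (1 + lam) := div_nonneg (mul_nonneg (Nat.cast_nonneg n) (by linarith)) (by linarith)
  have hx : (n : ℝ) * (1 - lam) / (1 + lam) ≤ ρ ^ 2 := by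
    have h1 := Real.sq_sqrt hxnn
    nlinarith [pow_le_pow_left₀ (Real.sqrt_nonneg ((n : ℝ) * (1 - lam) / (1 + lam))) hρ 2]
  have hx' : (n : ℝ) * (1 - lam) ≤ ρ ^ 2 * (1 + lam) := by
    have h1p : (0:ℝ) < 1 + lam := by linarith
    rw [div_le_iff₀ h1p] at hx
    linarith
  intro γ r hγ hr ℓ
  have ht0 : 0 ≤ lam ^ ℓ := pow_nonneg hlam0.le ℓ
  have ht1 : lam ^ ℓ ≤ 1 := pow_le_one₀ hlam0.le hlam1.le
  have hgr : r ≤ γ * r := by nlinarith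
  have ha : ρ * lam ^ ℓ ≤ γ * r - ρ * (1 - lam ^ ℓ) := by nlinarith
  have h2l : lam ^ (2 * ℓ) = (lam ^ ℓ) ^ 2 := by rw [mul_comm, pow_mul]
  have hsucc : lam ^ (ℓ + 1) = lam ^ ℓ * lam := by ring
  rw [h2l, hsucc]
  nlinarith [mul_le_mul_of_nonneg_right hx' (mul_nonneg (mul_nonneg (by linarith : (0:ℝ) ≤ 1 - lam) ht0) ht0),
    mul_nonneg (mul_nonneg hρ0 ht0) (mul_nonneg (by linarith : (0:ℝ) ≤ 1 - lam) ht0),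
    mul_le_mul_of_nonneg_right ha (mul_nonneg (mul_nonneg hρ0 ht0) (by linarith : (0:ℝ) ≤ 1 - lam)),
    sq_nonneg (lam ^ ℓ), hρ0, ht0]
end

section
/- Let λ ∈ (0,1), n ∈ N⁺, N ∈ N⁺, ρ ≥ √(n(1−λ)/(1+λ)), γ ≥ 1 and r ≥ ρ. Then λ²(γ r − ρ(1 − λ^N))² + n(1−λ)² λ^{2N} ≤ (γ r − ρ(1 − λ^N))². -/
theorem terminal_scalar_inequality (lam : ℝ) (hlam0 : 0 < lam) (hlam1 : lam < 1)
    (n N : ℕ) (hn : 0 < n) (hN : 0 < N) (ρ γ r : ℝ)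
    (hρ : Real.sqrt ((n : ℝ) * (1 - lam) / (1 + lam)) ≤ ρ)
    (hγ : 1 ≤ γ) (hr : ρ ≤ r) :
    lam ^ 2 * (γ * r - ρ * (1 - lam ^ N)) ^ 2 + (n : ℝ) * (1 - lam) ^ 2 * lam ^ (2 * N)
      ≤ (γ * r - ρ * (1 - lam ^ N)) ^ 2 := by
  have hs0 : 0 ≤ Real.sqrt ((n : ℝ) * (1 - lam) / (1 + lam)) := Real.sqrt_nonneg _
  have hρ0 : 0 ≤ ρ := le_trans hs0 hρ
  have harg : 0 ≤ (n : ℝ) * (1 - lam) / (1 + lam) :=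
    div_nonneg (mul_nonneg (Nat.cast_nonneg n) (by linarith)) (by linarith)
  have hsq : (Real.sqrt ((n : ℝ) * (1 - lam) / (1 + lam))) ^ 2
      = (n : ℝ) * (1 - lam) / (1 + lam) := Real.sq_sqrt harg
  have hρ2 : (n : ℝ) * (1 - lam) / (1 + lam) ≤ ρ ^ 2 := by
    nlinarith [hρ, hsq, hs0]
  have hρ2' : (n : ℝ) * (1 - lam) ≤ (1 + lam) * ρ ^ 2 := by
    rw [div_le_iff₀ (by linarith : (0:ℝ) < 1 + lam)] at hρ2
    linarith [hρ2]
  have hlN : 0 < lam ^ N := pow_pos hlam0 N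
  have hA : ρ * lam ^ N ≤ γ * r - ρ * (1 - lam ^ N) := by nlinarith
  have h2N : lam ^ (2 * N) = (lam ^ N) ^ 2 := by rw [mul_comm, pow_mul]
  rw [h2N]
  have hA0 : (0:ℝ) ≤ γ * r - ρ * (1 - lam ^ N) := le_trans (by positivity) hA
  have h1 : (ρ * lam ^ N) ^ 2 ≤ (γ * r - ρ * (1 - lam ^ N)) ^ 2 :=
    pow_le_pow_left₀ (by positivity) hA 2
  have h2 : (n : ℝ) * (1 - lam) * ((1 - lam) * (lam ^ N) ^ 2)
      ≤ (1 + lam) * ρ ^ 2 * ((1 - lam) * (lam ^ N) ^ 2) :=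
    mul_le_mul_of_nonneg_right hρ2' (mul_nonneg (by linarith) (sq_nonneg _))
  nlinarith [h1, h2, mul_le_mul_of_nonneg_left h1 (by nlinarith : (0:ℝ) ≤ 1 - lam ^ 2)]
end

section
/- Let W ≻ 0, λ ∈ (0,1), and A_K, Γ_w with A_K W A_Kᵀ ⪯ λ² W and Γ_w ⪯ (1−λ)² W. Then for every ℓ ∈ N, tr(W^{-1/2} A_K^ℓ Γ_w (A_K^ℓ)ᵀ W^{-1/2}) ≤ n (1−λ)² λ^{2ℓ}. -/
open Matrix

lemma myPosSemidef_smul {m : ℕ} {M : Matrix (Fin m) (Fin m) ℝ} (h : M.PosSemidef)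
    {c : ℝ} (hc : 0 ≤ c) : (c • M).PosSemidef := by
  refine PosSemidef.of_dotProduct_mulVec_nonneg ?_ (fun x => ?_)
  · unfold Matrix.IsHermitian
    rw [Matrix.conjTranspose_smul, h.1]
    simp
  · rw [Matrix.smul_mulVec, dotProduct_smul]
    exact mul_nonneg hc (h.dotProduct_mulVec_nonneg x)

lemma myPosSemidef_trace_nonneg {m : ℕ} {M : Matrix (Fin m) (Fin m) ℝ}
    (h : M.PosSemidef) : 0 ≤ M.trace := by
  apply Finset.sum_nonneg
  intro i _
  have := h.dotProduct_mulVec_nonneg (Pi.single i 1)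
  simpa [dotProduct, Matrix.mulVec, Pi.single_apply] using this

theorem trace_bound_iterate {n : ℕ}
    (A_K W Γ_w : Matrix (Fin n) (Fin n) ℝ) (hW : W.PosDef)
    (lam : ℝ) (hlam0 : 0 < lam) (hlam1 : lam < 1)
    (hΓ : Γ_w.PosSemidef)
    (hAW : (lam ^ 2 • W - A_K * W * A_Kᵀ).PosSemidef)
    (hΓW : ((1 - lam) ^ 2 • W - Γ_w).PosSemidef)
    (S : Matrix (Fin n) (Fin n) ℝ) (hS : S.PosDef) (hSsq : S * S = W⁻¹) :
    ∀ ℓ : ℕ,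
      (S * (A_K ^ ℓ) * Γ_w * (A_K ^ ℓ)ᵀ * S).trace ≤ (n : ℝ) * (1 - lam) ^ 2 * lam ^ (2 * ℓ) := by
  have key : ∀ ℓ : ℕ,
      (((1 - lam) ^ 2 * lam ^ (2 * ℓ)) • W - (A_K ^ ℓ) * Γ_w * (A_K ^ ℓ)ᵀ).PosSemidef := by
    intro ℓ
    induction ℓ with
    | zero => simpa using hΓW
    | succ k ih =>
      have h1 := ih.mul_mul_conjTranspose_same A_K
      have c0 : 0 ≤ (1 - lam) ^ 2 * lam ^ (2 * k) := by positivity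
      have h2 := myPosSemidef_smul hAW c0
      have h3 := h1.add h2
      have heq : A_K * (((1 - lam) ^ 2 * lam ^ (2 * k)) • W - A_K ^ k * Γ_w * (A_K ^ k)ᵀ) * A_Kᴴ
          + ((1 - lam) ^ 2 * lam ^ (2 * k)) • (lam ^ 2 • W - A_K * W * A_Kᵀ)
          = ((1 - lam) ^ 2 * lam ^ (2 * (k + 1))) • W
            - (A_K ^ (k + 1)) * Γ_w * (A_K ^ (k + 1))ᵀ := by
        have hAk : A_K ^ (k + 1) = A_K * A_K ^ k := pow_succ' A_K k
        have e1 : 2 * (k + 1) = 2 * k + 2 := by ring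
        have hm : A_K * (A_K ^ k * Γ_w * (A_K ^ k)ᵀ) * A_Kᵀ
            = A_K * A_K ^ k * Γ_w * ((A_K ^ k)ᵀ * A_Kᵀ) := by noncomm_ring
        rw [hAk, conjTranspose_eq_transpose_of_trivial, transpose_mul, e1, pow_add,
          mul_sub, sub_mul, hm, smul_sub, smul_smul, Matrix.mul_smul, Matrix.smul_mul]
        module
      rw [heq] at h3
      exact h3
  intro ℓ
  have hD := key ℓ
  have hSH : Sᴴ = S := hS.isHermitian
  have hPSD : (S * (((1 - lam) ^ 2 * lam ^ (2 * ℓ)) • W - (A_K ^ ℓ) * Γ_w * (A_K ^ ℓ)ᵀ) * S).PosSemidef := by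
    have := hD.mul_mul_conjTranspose_same S
    rwa [hSH] at this
  have htr := myPosSemidef_trace_nonneg hPSD
  have hSWS : (S * W * S).trace = (n : ℝ) := by
    rw [trace_mul_cycle, hSsq, Matrix.nonsing_inv_mul W (isUnit_iff_ne_zero.mpr hW.det_pos.ne'), trace_one]
    simp
  have hexp : (S * (((1 - lam) ^ 2 * lam ^ (2 * ℓ)) • W - (A_K ^ ℓ) * Γ_w * (A_K ^ ℓ)ᵀ) * S).trace
      = ((1 - lam) ^ 2 * lam ^ (2 * ℓ)) * (S * W * S).trace
        - (S * (A_K ^ ℓ) * Γ_w * (A_K ^ ℓ)ᵀ * S).trace := by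
    simp only [mul_sub, sub_mul, trace_sub, Matrix.mul_smul, Matrix.smul_mul, trace_smul,
      smul_eq_mul, mul_assoc]
  rw [hexp, hSWS] at htr
  linarith
end
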